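/- Let U_1, …, U_k be finite-dimensional F_p-vector spaces, let α : U_1 × ⋯ × U_k → F_p be a multilinear form with bias α ≥ c, let A : U_1 × ⋯ × U_{k−1} → U_k be the multilinear map with α(x_1,…,x_k) = A(x_1,…,x_{k−1})·x_k, and let Z = { z : A(z) = 0 }, so that |Z| ≥ c |U_1 × ⋯ × U_{k−1}|. Let 0 < ε ≤ 1 and set m = ⌈2^7 ε^{−4} c^{−4}⌉. Then there exist t^{(1)}, …, t^{(m)} ∈ U_1 × ⋯ × U_{k−1} such that the function f on U_1 × ⋯ × U_k defined by f(x_1,…,x_k) = (|U_1 × ⋯ × U_{k−1}|/(m |Z|)) · Σ_{i∈[m]} 1[(x_1,…,x_{k−1}) ∈ t^{(i)} + Z] · χ(L_{t^{(i)}}(x_1,…,x_{k−1}) · x_k) satisfies ‖χ ∘ α − f‖_{L²} ≤ ε/2, where L_t(x_1,…,x_{k−1}) = Σ_{I ⊊ [k−1]} (−1)^{k−|I|} A((x_i)_{i∈I}, (t_i)_{i∈[k−1]∖I}). -/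

import Mathlib

open scoped BigOperators

noncomputable def chi (p : ℕ) (a : ZMod p) : ℂ :=
  Complex.exp (2 * Real.pi * Complex.I * (a.val : ℂ) / (p : ℂ))

noncomputable def expAvg {X : Type*} [Fintype X] (F : X → ℂ) : ℂ :=
  (∑ x : X, F x) / (Fintype.card X : ℂ)

noncomputable def biasF {p : ℕ} {X : Type*} [Fintype X] (α : X → ZMod p) : ℝ :=
  (expAvg fun x => chi p (α x)).re

noncomputable def L2norm {X : Type*} [Fintype X] (F : X → ℂ) : ℝ :=
  Real.sqrt ((∑ x : X, ‖F x‖ ^ 2) / (Fintype.card X : ℝ))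

lemma abs_chi (p : ℕ) (a : ZMod p) : ‖chi p a‖ = 1 := by
  have h : (2 * (Real.pi : ℂ) * Complex.I * (a.val : ℂ) / (p : ℂ))
      = Complex.I * ((2 * Real.pi * (a.val : ℝ) / (p : ℝ) : ℝ) : ℂ) := by
    push_cast; ring
  rw [chi, h, Complex.norm_exp]
  have : (Complex.I * ((2 * Real.pi * (a.val : ℝ) / (p : ℝ) : ℝ) : ℂ)).re = 0 := by
    simp [Complex.mul_re]
  rw [this, Real.exp_zero]

lemma incl_excl {p n : ℕ} {U : Fin n → Type} [∀ i, AddCommGroup (U i)]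
    [∀ i, Module (ZMod p) (U i)] {V : Type} [AddCommGroup V] [Module (ZMod p) V]
    (A : MultilinearMap (ZMod p) U V) (x t : ∀ i, U i) :
    ∑ S : Finset (Fin n), ((-1 : ZMod p) ^ (n - S.card)) • A (fun j => if j ∈ S then x j else t j)
      = A (fun j => x j - t j) := by
  classical
  set z : ∀ i, U i := fun j => x j - t j with hz
  have key : ∀ S : Finset (Fin n), A (fun j => if j ∈ S then x j else t j)
      = ∑ T : Finset (Fin n), if T ⊆ S then A (T.piecewise z t) else 0 := by
    intro S
    have h1 : (fun j => if j ∈ S then x j else t j) = (S.piecewise z 0) + t := by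
      funext j; by_cases hj : j ∈ S <;> simp [Finset.piecewise, hj, hz]
    rw [h1, A.map_add_univ]
    refine Finset.sum_congr rfl fun T _ => ?_
    by_cases hTS : T ⊆ S
    · rw [if_pos hTS]; congr 1
      funext j; by_cases hj : j ∈ T
      · simp [Finset.piecewise, hj, hTS hj]
      · simp [Finset.piecewise, hj]
    · rw [if_neg hTS]
      obtain ⟨j, hjT, hjS⟩ := Finset.not_subset.mp hTS
      exact A.map_coord_zero j (by simp [Finset.piecewise, hjT, hjS])
  have signsum : ∀ T : Finset (Fin n),
      (∑ S : Finset (Fin n), if T ⊆ S then ((-1 : ZMod p) ^ (n - S.card)) else 0)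
        = if T = Finset.univ then 1 else 0 := by
    intro T
    have h2 : (∑ S : Finset (Fin n), if T ⊆ S then ((-1 : ZMod p) ^ (n - S.card)) else 0)
        = ∑ W ∈ Tᶜ.powerset, ((-1 : ZMod p) ^ W.card) := by
      rw [← Finset.sum_filter]
      refine Finset.sum_nbij' (fun S => Sᶜ) (fun W => Wᶜ) ?_ ?_ ?_ ?_ ?_
      · intro S hS
        simp only [Finset.mem_filter, Finset.mem_univ, true_and] at hS
        simpa [Finset.mem_powerset] using Finset.compl_subset_compl.mpr hS
      · intro W hW
        simp only [Finset.mem_powerset] at hW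
        simp only [Finset.mem_filter, Finset.mem_univ, true_and]
        have := Finset.compl_subset_compl.mpr hW
        simpa using this
      · intro S _; simp
      · intro W _; simp
      · intro S hS
        congr 1
        rw [Finset.card_compl]
        simp
    rw [h2]
    have h3 : (∑ W ∈ Tᶜ.powerset, ((-1 : ZMod p) ^ W.card))
        = (((∑ W ∈ Tᶜ.powerset, ((-1 : ℤ) ^ W.card)) : ℤ) : ZMod p) := by
      push_cast; rfl
    rw [h3, Finset.sum_powerset_neg_one_pow_card]
    by_cases hT : T = Finset.univ
    · simp [hT]
    · have : Tᶜ ≠ ∅ := by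
        simp only [ne_eq, Finset.compl_eq_empty_iff]
        exact hT
      simp [this, hT]
  calc ∑ S : Finset (Fin n), ((-1 : ZMod p) ^ (n - S.card)) • A (fun j => if j ∈ S then x j else t j)
      = ∑ S : Finset (Fin n), ∑ T : Finset (Fin n),
          (if T ⊆ S then ((-1 : ZMod p) ^ (n - S.card)) else 0) • A (T.piecewise z t) := by
        refine Finset.sum_congr rfl fun S _ => ?_
        rw [key S, Finset.smul_sum]
        refine Finset.sum_congr rfl fun T _ => ?_
        by_cases h : T ⊆ S <;> simp [h]
    _ = ∑ T : Finset (Fin n), (∑ S : Finset (Fin n),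
          if T ⊆ S then ((-1 : ZMod p) ^ (n - S.card)) else 0) • A (T.piecewise z t) := by
        rw [Finset.sum_comm]
        refine Finset.sum_congr rfl fun T _ => ?_
        rw [Finset.sum_smul]
    _ = A z := by
        simp_rw [signsum, ite_smul, one_smul, zero_smul]
        rw [Finset.sum_ite_eq' Finset.univ Finset.univ (fun T => A (T.piecewise z t))]
        simp

lemma sum_lin {P : Type*} [Fintype P] (m : ℕ) (Y : P → ℝ) (hY : ∑ u, Y u = 0) :
    ∑ t : Fin m → P, (∑ i, Y (t i)) = 0 := by
  induction m with
  | zero => simp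
  | succ m ih =>
    have e : ∑ t : Fin (m+1) → P, (∑ i, Y (t i))
        = ∑ q : P × (Fin m → P), (Y q.1 + ∑ i : Fin m, Y (q.2 i)) := by
      refine Fintype.sum_equiv (Fin.consEquiv fun _ => P).symm _ _ fun t => ?_
      rw [Fin.sum_univ_succ]
      simp [Fin.consEquiv, Fin.tail]
    rw [e, Fintype.sum_prod_type]
    simp_rw [Finset.sum_add_distrib, Finset.sum_const, ih]
    rw [smul_zero, add_zero, ← Finset.smul_sum, hY, smul_zero]

lemma sum_sq_sum {P : Type*} [Fintype P] (m : ℕ) (Y : P → ℝ) (hY : ∑ u, Y u = 0) :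
    (Fintype.card P : ℝ) * ∑ t : Fin m → P, (∑ i, Y (t i)) ^ 2 =
      (Fintype.card P : ℝ) ^ m * m * ∑ u, Y u ^ 2 := by
  induction m with
  | zero => simp
  | succ m ih =>
    have e : ∑ t : Fin (m+1) → P, (∑ i, Y (t i)) ^ 2
        = ∑ q : P × (Fin m → P), (Y q.1 + ∑ i : Fin m, Y (q.2 i)) ^ 2 := by
      refine Fintype.sum_equiv (Fin.consEquiv fun _ => P).symm _ _ fun t => ?_
      rw [Fin.sum_univ_succ]
      simp [Fin.consEquiv, Fin.tail]
    rw [e, Fintype.sum_prod_type]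
    have expand : ∀ u : P, ∑ s : Fin m → P, (Y u + ∑ i : Fin m, Y (s i)) ^ 2
        = (Fintype.card (Fin m → P) : ℝ) * Y u ^ 2
          + 2 * Y u * ∑ s : Fin m → P, (∑ i : Fin m, Y (s i))
          + ∑ s : Fin m → P, (∑ i : Fin m, Y (s i)) ^ 2 := by
      intro u
      simp_rw [add_sq]
      rw [Finset.sum_add_distrib, Finset.sum_add_distrib, Finset.sum_const, Finset.card_univ,
        ← Finset.mul_sum, nsmul_eq_mul]
    simp_rw [expand, sum_lin m Y hY, mul_zero, add_zero, Finset.sum_add_distrib,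
      Finset.sum_const, Finset.card_univ, nsmul_eq_mul]
    rw [← Finset.mul_sum, mul_add, ← mul_assoc (Fintype.card P : ℝ),
      mul_comm (Fintype.card P : ℝ) (Fintype.card (Fin m → P) : ℝ), mul_assoc, mul_assoc, ih]
    rw [Fintype.card_fun, Fintype.card_fin]
    push_cast
    ring

theorem first_approximation (p k : ℕ) [Fact p.Prime] (hk : 1 ≤ k)
    (U : Fin (k - 1) → Type) [∀ i, AddCommGroup (U i)] [∀ i, Module (ZMod p) (U i)]
    [∀ i, Fintype (U i)]
    (V : Type) [AddCommGroup V] [Module (ZMod p) V] [Fintype V]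
    (B : V →ₗ[ZMod p] V →ₗ[ZMod p] ZMod p)
    (hBsymm : ∀ v w, B v w = B w v)
    (hBnondeg : ∀ v, (∀ w, B v w = 0) → v = 0)
    (A : MultilinearMap (ZMod p) U V)
    (c ε : ℝ) (hc : 0 < c) (hε0 : 0 < ε) (hε1 : ε ≤ 1)
    (hbias : c ≤ biasF fun xy : (∀ i, U i) × V => B (A xy.1) xy.2)
    (hZ : c * (Fintype.card (∀ i, U i) : ℝ) ≤ (({z : ∀ i, U i | A z = 0}).ncard : ℝ)) :
    ∃ t : Fin ⌈(2 : ℝ) ^ 7 * ε⁻¹ ^ 4 * c⁻¹ ^ 4⌉₊ → (∀ i, U i),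
      L2norm (fun xy : (∀ i, U i) × V =>
        chi p (B (A xy.1) xy.2) -
          ((Fintype.card (∀ i, U i) : ℂ) /
              ((⌈(2 : ℝ) ^ 7 * ε⁻¹ ^ 4 * c⁻¹ ^ 4⌉₊ : ℂ) *
                (({z : ∀ i, U i | A z = 0}).ncard : ℂ))) *
            ∑ i : Fin ⌈(2 : ℝ) ^ 7 * ε⁻¹ ^ 4 * c⁻¹ ^ 4⌉₊,
              Set.indicator ((fun z : ∀ i, U i => t i + z) '' {z : ∀ i, U i | A z = 0})
                  (fun _ => (1 : ℂ)) xy.1 *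
                chi p (B
                  (∑ S ∈ Finset.univ.filter
                      (fun S : Finset (Fin (k - 1)) => S ≠ Finset.univ),
                    ((-1 : ZMod p) ^ (k - S.card)) •
                      A (fun j => if j ∈ S then xy.1 j else t i j))
                  xy.2)) ≤ ε / 2 := by
  classical
  set M : ℕ := ⌈(2 : ℝ) ^ 7 * ε⁻¹ ^ 4 * c⁻¹ ^ 4⌉₊ with hMdef
  set N : ℕ := Fintype.card (∀ i, U i) with hNdef
  set Zc : ℕ := ({z : ∀ i, U i | A z = 0}).ncard with hZcdef
  have hPne : Nonempty (∀ i, U i) := ⟨0⟩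
  have hNpos : 0 < N := Fintype.card_pos
  have hZcF : Zc = (Finset.univ.filter (fun z : ∀ i, U i => A z = 0)).card := by
    rw [hZcdef, Set.ncard_eq_toFinset_card']
    congr 1
    ext z
    simp
  have hZcN : Zc ≤ N := by
    rw [hZcF, hNdef]
    exact le_trans (Finset.card_filter_le _ _) (le_of_eq (Finset.card_univ))
  have hZc_pos : 0 < Zc := by
    have : (0 : ℝ) < Zc := lt_of_lt_of_le (by positivity) hZ
    exact_mod_cast this
  have hMpos : 0 < M := Nat.ceil_pos.mpr (by positivity)
  have hc1 : c ≤ 1 := by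
    have h1 : c * (N : ℝ) ≤ (N : ℝ) := le_trans hZ (by exact_mod_cast hZcN)
    have h2 : (0 : ℝ) < N := by exact_mod_cast hNpos
    nlinarith
  -- membership in the translate of Z
  have hmem : ∀ (u x : ∀ i, U i),
      x ∈ (fun z : ∀ i, U i => u + z) '' {z : ∀ i, U i | A z = 0}
        ↔ A (fun j => x j - u j) = 0 := by
    intro u x
    constructor
    · rintro ⟨z, hz, rfl⟩
      have hzz : (fun j => (u + z) j - u j) = z := by funext j; simp
      rw [hzz]
      exact hz
    · intro h
      refine ⟨fun j => x j - u j, h, ?_⟩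
      funext j
      simp
  -- the inner sum identity
  have hinner : ∀ (x u : ∀ i, U i), A (fun j => x j - u j) = 0 →
      (∑ S ∈ Finset.univ.filter (fun S : Finset (Fin (k - 1)) => S ≠ Finset.univ),
        ((-1 : ZMod p) ^ (k - S.card)) • A (fun j => if j ∈ S then x j else u j)) = A x := by
    intro x u h0
    have hfull := incl_excl A x u
    have hsplit : ∑ S : Finset (Fin (k-1)), ((-1 : ZMod p) ^ ((k-1) - S.card)) •
          A (fun j => if j ∈ S then x j else u j)
        = A x + ∑ S ∈ Finset.univ.erase Finset.univ, ((-1 : ZMod p) ^ ((k-1) - S.card)) •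
          A (fun j => if j ∈ S then x j else u j) := by
      rw [← Finset.add_sum_erase _ _ (Finset.mem_univ Finset.univ)]
      congr 1
      simp
    have hfilter : Finset.univ.filter (fun S : Finset (Fin (k - 1)) => S ≠ Finset.univ)
        = Finset.univ.erase Finset.univ := by
      ext S
      simp [Finset.mem_erase, and_comm]
    have hsign : ∀ S : Finset (Fin (k-1)),
        ((-1 : ZMod p) ^ (k - S.card)) = -((-1 : ZMod p) ^ ((k-1) - S.card)) := by
      intro S
      have hcard : S.card ≤ k - 1 := by
        simpa using Finset.card_le_univ S
      have : k - S.card = ((k-1) - S.card) + 1 := by omega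
      rw [this, pow_succ]
      ring
    rw [hfilter]
    have : ∑ S ∈ Finset.univ.erase Finset.univ, ((-1 : ZMod p) ^ (k - S.card)) •
          A (fun j => if j ∈ S then x j else u j)
        = -∑ S ∈ Finset.univ.erase Finset.univ, ((-1 : ZMod p) ^ ((k-1) - S.card)) •
          A (fun j => if j ∈ S then x j else u j) := by
      rw [← Finset.sum_neg_distrib]
      refine Finset.sum_congr rfl fun S _ => ?_
      rw [hsign S, neg_smul]
    rw [this]
    have h2 : ∑ S ∈ Finset.univ.erase Finset.univ, ((-1 : ZMod p) ^ ((k-1) - S.card)) •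
          A (fun j => if j ∈ S then x j else u j) = A (fun j => x j - u j) - A x := by
      have := hfull
      rw [hsplit] at this
      linear_combination (norm := abel) this - hfull + hfull
    rw [h2, h0]
    abel
  -- counting
  have hcount : ∀ x : ∀ i, U i,
      (Finset.univ.filter (fun u : ∀ i, U i => A (fun j => x j - u j) = 0)).card = Zc := by
    intro x
    rw [hZcF]
    apply Finset.card_bij' (fun u _ => x - u) (fun z _ => x - z)
    · intro u hu
      simp only [Finset.mem_filter, Finset.mem_univ, true_and] at hu ⊢
      exact hu
    · intro z hz
      simp only [Finset.mem_filter, Finset.mem_univ, true_and] at hz ⊢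
      have : (fun j => x j - (x - z) j) = z := by funext j; simp
      rw [this]
      exact hz
    · intro u _
      simp
    · intro z _
      simp
  set r : ℝ := (N : ℝ) / ((M : ℝ) * (Zc : ℝ)) with hrdef
  have hNR : (0:ℝ) < N := by exact_mod_cast hNpos
  have hMR : (0:ℝ) < M := by exact_mod_cast hMpos
  have hZcR : (0:ℝ) < Zc := by exact_mod_cast hZc_pos
  have hZleN : (Zc:ℝ) ≤ (N:ℝ) := by exact_mod_cast hZcN
  have hrpos : 0 < r := by rw [hrdef]; positivity
  set Y : (∀ i, U i) → (∀ i, U i) → ℝ := fun x u =>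
    (Zc : ℝ)/(N : ℝ) - (if A (fun j => x j - u j) = 0 then 1 else 0) with hYdef
  have hY0 : ∀ x, ∑ u, Y x u = 0 := by
    intro x
    rw [hYdef]
    rw [Finset.sum_sub_distrib, Finset.sum_const, Finset.card_univ, Finset.sum_boole, hcount,
      nsmul_eq_mul]
    rw [← hNdef]
    field_simp
    ring
  have hYsq : ∀ x, ∑ u, (Y x u)^2 ≤ (Zc : ℝ) := by
    intro x
    rw [hYdef]
    have hb : ∀ u : ∀ i, U i, ((Zc : ℝ)/(N : ℝ) - (if A (fun j => x j - u j) = 0 then 1 else 0))^2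
        = ((Zc : ℝ)/(N : ℝ))^2 - 2*((Zc : ℝ)/(N : ℝ))*(if A (fun j => x j - u j) = 0 then 1 else 0)
          + (if A (fun j => x j - u j) = 0 then 1 else 0) := by
      intro u
      split <;> ring
    simp_rw [hb]
    rw [Finset.sum_add_distrib, Finset.sum_sub_distrib, Finset.sum_const, Finset.card_univ,
      Finset.sum_boole, hcount, ← Finset.mul_sum, Finset.sum_boole, hcount, nsmul_eq_mul,
      ← hNdef]
    have h1 : (N:ℝ) * ((Zc : ℝ)/(N : ℝ))^2 = (Zc:ℝ)^2/(N:ℝ) := by field_simp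
    have h2 : 2*((Zc : ℝ)/(N : ℝ))*(Zc:ℝ) = 2*((Zc:ℝ)^2/(N:ℝ)) := by field_simp
    rw [h1, h2]
    have h3 : (0:ℝ) ≤ (Zc:ℝ)^2/(N:ℝ) := by positivity
    linarith
  have hrepr : ∀ (x : ∀ i, U i) (t : Fin M → ∀ i, U i),
      1 - r * ((Finset.univ.filter (fun i : Fin M => A (fun j => x j - t i j) = 0)).card : ℝ)
        = r * ∑ i : Fin M, Y x (t i) := by
    intro x t
    rw [hYdef]
    rw [Finset.sum_sub_distrib, Finset.sum_const, Finset.card_univ, Finset.sum_boole,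
      Fintype.card_fin, nsmul_eq_mul]
    rw [mul_sub, hrdef]
    have : (N : ℝ) / ((M : ℝ) * (Zc : ℝ)) * ((M:ℝ) * ((Zc : ℝ)/(N : ℝ))) = 1 := by
      field_simp
    rw [this]
  -- numeric bound
  have hM4 : 4 ≤ (M:ℝ) * c * ε^2 := by
    have h1 : (2:ℝ)^7 * ε⁻¹^4 * c⁻¹^4 ≤ (M:ℝ) := Nat.le_ceil _
    have h2 : (2:ℝ)^7 * ε⁻¹^4 * c⁻¹^4 * (c*ε^2) ≤ (M:ℝ) * (c*ε^2) :=
      mul_le_mul_of_nonneg_right h1 (by positivity)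
    have h3 : (2:ℝ)^7 * ε⁻¹^4 * c⁻¹^4 * (c*ε^2) = 128 / (ε^2 * c^3) := by
      field_simp
      ring
    have hε2 : ε^2 ≤ 1 := pow_le_one₀ hε0.le hε1
    have hc3 : c^3 ≤ 1 := pow_le_one₀ hc.le hc1
    have hm : ε^2 * c^3 ≤ 1 := by
      calc ε^2 * c^3 ≤ 1 * 1 := mul_le_mul hε2 hc3 (pow_nonneg hc.le 3) zero_le_one
        _ = 1 := by norm_num
    have h4 : (4:ℝ) ≤ 128 / (ε^2 * c^3) := by
      rw [le_div_iff₀ (by positivity)]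
      linarith
    calc (4:ℝ) ≤ 128/(ε^2*c^3) := h4
      _ = (2:ℝ)^7 * ε⁻¹^4*c⁻¹^4*(c*ε^2) := h3.symm
      _ ≤ (M:ℝ)*(c*ε^2) := h2
      _ = (M:ℝ)*c*ε^2 := by ring
  have hnum : r^2 * (M:ℝ) * (Zc:ℝ) ≤ (N:ℝ) * (ε/2)^2 := by
    have hr2 : r^2 * (M:ℝ) * (Zc:ℝ) = (N:ℝ)^2/((M:ℝ)*(Zc:ℝ)) := by
      rw [hrdef]
      field_simp
    rw [hr2]
    have hZlow : c*(N:ℝ) ≤ (Zc:ℝ) := hZ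
    have s1 : (N:ℝ)^2/((M:ℝ)*(Zc:ℝ)) ≤ (N:ℝ)^2/((M:ℝ)*(c*(N:ℝ))) := by
      gcongr
    have s2 : (N:ℝ)^2/((M:ℝ)*(c*(N:ℝ))) = (N:ℝ)/((M:ℝ)*c) := by
      field_simp
    have s3 : (N:ℝ)/((M:ℝ)*c) ≤ (N:ℝ)*(ε/2)^2 := by
      rw [div_le_iff₀ (by positivity)]
      have h5 : (N:ℝ)*4 ≤ (N:ℝ)*((M:ℝ)*c*ε^2) := mul_le_mul_of_nonneg_left hM4 hNR.le
      have e : (N:ℝ)*(ε/2)^2*((M:ℝ)*c) = ((N:ℝ)*((M:ℝ)*c*ε^2))/4 := by ring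
      rw [e]
      linarith [h5]
    calc (N:ℝ)^2/((M:ℝ)*(Zc:ℝ)) ≤ (N:ℝ)^2/((M:ℝ)*(c*(N:ℝ))) := s1
      _ = (N:ℝ)/((M:ℝ)*c) := s2
      _ ≤ (N:ℝ)*(ε/2)^2 := s3
  -- existence of a good sample
  have main : ∃ t : Fin M → (∀ i, U i), ∑ x : ∀ i, U i,
      (1 - r * ((Finset.univ.filter
          (fun i : Fin M => A (fun j => x j - t i j) = 0)).card : ℝ))^2
        ≤ (N:ℝ) * (ε/2)^2 := by
    have htot : ∑ t : Fin M → (∀ i, U i), ∑ x : ∀ i, U i,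
        (1 - r * ((Finset.univ.filter
            (fun i : Fin M => A (fun j => x j - t i j) = 0)).card : ℝ))^2
        ≤ ∑ _t : Fin M → (∀ i, U i), (N:ℝ)*(ε/2)^2 := by
      rw [Finset.sum_comm]
      have perx : ∀ x : ∀ i, U i, ∑ t : Fin M → (∀ i, U i),
          (1 - r * ((Finset.univ.filter
              (fun i : Fin M => A (fun j => x j - t i j) = 0)).card : ℝ))^2
          = r^2 * (((N:ℝ)^M * (M:ℝ) * ∑ u, (Y x u)^2)/(N:ℝ)) := by
        intro x
        simp_rw [hrepr x, mul_pow]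
        rw [← Finset.mul_sum]
        congr 1
        have h := sum_sq_sum M (Y x) (hY0 x)
        rw [← hNdef] at h
        rw [eq_div_iff (ne_of_gt hNR)]
        linear_combination h
      calc ∑ x : ∀ i, U i, ∑ t : Fin M → (∀ i, U i),
            (1 - r * ((Finset.univ.filter
                (fun i : Fin M => A (fun j => x j - t i j) = 0)).card : ℝ))^2
          = ∑ x : ∀ i, U i, r^2 * (((N:ℝ)^M * (M:ℝ) * ∑ u, (Y x u)^2)/(N:ℝ)) := by
            exact Finset.sum_congr rfl fun x _ => perx x
        _ ≤ ∑ x : ∀ i, U i, r^2 * (((N:ℝ)^M * (M:ℝ) * (Zc:ℝ))/(N:ℝ)) := by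
            refine Finset.sum_le_sum fun x _ => ?_
            gcongr
            exact hYsq x
        _ = (N:ℝ) * (r^2 * (((N:ℝ)^M * (M:ℝ) * (Zc:ℝ))/(N:ℝ))) := by
            rw [Finset.sum_const, Finset.card_univ, ← hNdef, nsmul_eq_mul]
        _ = (N:ℝ)^M * (r^2 * (M:ℝ) * (Zc:ℝ)) := by
            field_simp
        _ ≤ (N:ℝ)^M * ((N:ℝ)*(ε/2)^2) := by
            gcongr
        _ = ∑ _t : Fin M → (∀ i, U i), (N:ℝ)*(ε/2)^2 := by
            rw [Finset.sum_const, Finset.card_univ, Fintype.card_fun, Fintype.card_fin,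
              ← hNdef, nsmul_eq_mul]
            push_cast
            ring
    have hne : (Finset.univ : Finset (Fin M → ∀ i, U i)).Nonempty :=
      Finset.univ_nonempty
    obtain ⟨t, _, ht⟩ := Finset.exists_le_of_sum_le hne htot
    exact ⟨t, ht⟩
  obtain ⟨t, ht⟩ := main
  refine ⟨t, ?_⟩
  have hVne : Nonempty V := ⟨0⟩
  have hVpos : (0:ℝ) < (Fintype.card V : ℝ) := by exact_mod_cast Fintype.card_pos
  have hpt : ∀ xy : (∀ i, U i) × V,
      ‖chi p (B (A xy.1) xy.2) -
          ((N : ℂ) / ((M : ℂ) * (Zc : ℂ))) *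
            ∑ i : Fin M,
              Set.indicator ((fun z : ∀ i, U i => t i + z) '' {z : ∀ i, U i | A z = 0})
                  (fun _ => (1 : ℂ)) xy.1 *
                chi p (B
                  (∑ S ∈ Finset.univ.filter
                      (fun S : Finset (Fin (k - 1)) => S ≠ Finset.univ),
                    ((-1 : ZMod p) ^ (k - S.card)) •
                      A (fun j => if j ∈ S then xy.1 j else t i j))
                  xy.2)‖ ^ 2
        = (1 - r * ((Finset.univ.filter (fun i : Fin M => A (fun j => xy.1 j - t i j) = 0)).card : ℝ)) ^ 2 := by
    intro xy
    have h1 : (∑ i : Fin M,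
        Set.indicator ((fun z : ∀ i, U i => t i + z) '' {z : ∀ i, U i | A z = 0})
            (fun _ => (1 : ℂ)) xy.1 *
          chi p (B
            (∑ S ∈ Finset.univ.filter
                (fun S : Finset (Fin (k - 1)) => S ≠ Finset.univ),
              ((-1 : ZMod p) ^ (k - S.card)) •
                A (fun j => if j ∈ S then xy.1 j else t i j))
            xy.2))
        = (((Finset.univ.filter
            (fun i : Fin M => A (fun j => xy.1 j - t i j) = 0)).card : ℕ) : ℂ)
          * chi p (B (A xy.1) xy.2) := by
      calc (∑ i : Fin M,
          Set.indicator ((fun z : ∀ i, U i => t i + z) '' {z : ∀ i, U i | A z = 0})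
              (fun _ => (1 : ℂ)) xy.1 *
            chi p (B
              (∑ S ∈ Finset.univ.filter
                  (fun S : Finset (Fin (k - 1)) => S ≠ Finset.univ),
                ((-1 : ZMod p) ^ (k - S.card)) •
                  A (fun j => if j ∈ S then xy.1 j else t i j))
              xy.2))
          = ∑ i : Fin M, (if A (fun j => xy.1 j - t i j) = 0 then (1:ℂ) else 0) *
              chi p (B (A xy.1) xy.2) := by
            refine Finset.sum_congr rfl fun i _ => ?_
            by_cases hx : xy.1 ∈ (fun z : ∀ i, U i => t i + z) '' {z : ∀ i, U i | A z = 0}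
            · have h0 := (hmem (t i) xy.1).mp hx
              rw [hinner xy.1 (t i) h0, Set.indicator_of_mem hx, if_pos h0]
            · rw [Set.indicator_of_notMem hx,
                if_neg (fun h => hx ((hmem (t i) xy.1).mpr h)), zero_mul, zero_mul]
        _ = (((Finset.univ.filter
              (fun i : Fin M => A (fun j => xy.1 j - t i j) = 0)).card : ℕ) : ℂ)
            * chi p (B (A xy.1) xy.2) := by
            rw [← Finset.sum_mul, Finset.sum_boole]
    rw [h1]
    have h2 : chi p (B (A xy.1) xy.2) - ((N : ℂ) / ((M : ℂ) * (Zc : ℂ))) *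
          ((((Finset.univ.filter
              (fun i : Fin M => A (fun j => xy.1 j - t i j) = 0)).card : ℕ) : ℂ)
            * chi p (B (A xy.1) xy.2))
        = (((1 - r * ((Finset.univ.filter (fun i : Fin M => A (fun j => xy.1 j - t i j) = 0)).card : ℝ)) : ℝ) : ℂ) * chi p (B (A xy.1) xy.2) := by
      have h3 : (((1 - r * ((Finset.univ.filter (fun i : Fin M => A (fun j => xy.1 j - t i j) = 0)).card : ℝ)) : ℝ) : ℂ)
          = 1 - ((N : ℂ) / ((M : ℂ) * (Zc : ℂ))) *
              (((Finset.univ.filter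
                (fun i : Fin M => A (fun j => xy.1 j - t i j) = 0)).card : ℕ) : ℂ) := by
        rw [hrdef]
        push_cast
        ring
      rw [h3]
      ring
    rw [h2, norm_mul, abs_chi, mul_one, Complex.norm_real, Real.norm_eq_abs, sq_abs]
  have hsum : (∑ xy : (∀ i, U i) × V, ‖(fun xy : (∀ i, U i) × V => chi p (B (A xy.1) xy.2) -
          ((N : ℂ) / ((M : ℂ) * (Zc : ℂ))) *
            ∑ i : Fin M,
              Set.indicator ((fun z : ∀ i, U i => t i + z) '' {z : ∀ i, U i | A z = 0})
                  (fun _ => (1 : ℂ)) xy.1 *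
                chi p (B
                  (∑ S ∈ Finset.univ.filter
                      (fun S : Finset (Fin (k - 1)) => S ≠ Finset.univ),
                    ((-1 : ZMod p) ^ (k - S.card)) •
                      A (fun j => if j ∈ S then xy.1 j else t i j))
                  xy.2)) xy‖ ^ 2)
      = (Fintype.card V : ℝ) * ∑ x : ∀ i, U i, (1 - r * ((Finset.univ.filter (fun i : Fin M => A (fun j => x j - t i j) = 0)).card : ℝ)) ^ 2 := by
    calc (∑ xy : (∀ i, U i) × V,
          ‖(fun xy : (∀ i, U i) × V => chi p (B (A xy.1) xy.2) -
          ((N : ℂ) / ((M : ℂ) * (Zc : ℂ))) *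
            ∑ i : Fin M,
              Set.indicator ((fun z : ∀ i, U i => t i + z) '' {z : ∀ i, U i | A z = 0})
                  (fun _ => (1 : ℂ)) xy.1 *
                chi p (B
                  (∑ S ∈ Finset.univ.filter
                      (fun S : Finset (Fin (k - 1)) => S ≠ Finset.univ),
                    ((-1 : ZMod p) ^ (k - S.card)) •
                      A (fun j => if j ∈ S then xy.1 j else t i j))
                  xy.2)) xy‖ ^ 2)
        = ∑ xy : (∀ i, U i) × V, (1 - r * ((Finset.univ.filter (fun i : Fin M => A (fun j => xy.1 j - t i j) = 0)).card : ℝ)) ^ 2 :=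
          Finset.sum_congr rfl fun xy _ => hpt xy
      _ = ∑ x : ∀ i, U i, ∑ _y : V, (1 - r * ((Finset.univ.filter (fun i : Fin M => A (fun j => x j - t i j) = 0)).card : ℝ)) ^ 2 := by
          rw [Fintype.sum_prod_type]
      _ = (Fintype.card V : ℝ) * ∑ x : ∀ i, U i, (1 - r * ((Finset.univ.filter (fun i : Fin M => A (fun j => x j - t i j) = 0)).card : ℝ)) ^ 2 := by
          simp_rw [Finset.sum_const, Finset.card_univ, nsmul_eq_mul]
          rw [← Finset.mul_sum]
  rw [L2norm, hsum]
  have hcard : (Fintype.card ((∀ i, U i) × V) : ℝ) = (Fintype.card V : ℝ) * (N : ℝ) := by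
    rw [Fintype.card_prod, ← hNdef]
    push_cast
    ring
  rw [hcard, mul_div_mul_left _ _ (ne_of_gt hVpos)]
  have hfin : (∑ x : ∀ i, U i, (1 - r * ((Finset.univ.filter (fun i : Fin M => A (fun j => x j - t i j) = 0)).card : ℝ)) ^ 2) / (N : ℝ) ≤ (ε/2)^2 := by
    rw [div_le_iff₀ hNR]
    calc (∑ x : ∀ i, U i, (1 - r * ((Finset.univ.filter (fun i : Fin M => A (fun j => x j - t i j) = 0)).card : ℝ)) ^ 2) ≤ (N:ℝ) * (ε/2)^2 := ht
      _ = (ε/2)^2 * (N:ℝ) := by ring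
  calc Real.sqrt ((∑ x : ∀ i, U i, (1 - r * ((Finset.univ.filter (fun i : Fin M => A (fun j => x j - t i j) = 0)).card : ℝ)) ^ 2) / (N : ℝ))
      ≤ Real.sqrt ((ε/2)^2) := Real.sqrt_le_sqrt hfin
    _ = ε/2 := Real.sqrt_sq (by positivity)
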